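/- Let u_1, u_2, v_1, v_2, b ∈ Θ be homogeneous polynomials of degree N such that the four sums u_i + v_j (1 ≤ i, j ≤ 2) are pairwise distinct. Then ((1 − u_1)^{-1}(1 − u_2)^{-1}) ⊙ (b · (1 − v_1)^{-1}(1 − v_2)^{-1}) = b · (1 − u_1u_2 − v_1 − v_2 + v_1v_2) · ∏_{i,j=1}^2 (1 − u_i − v_j)^{-1}. -/

import Mathlib

variable {σ : Type*}

/-- Total degree of a monomial. -/
def monDeg (d : σ →₀ ℕ) : ℕ := d.sum fun _ n => n

/-- `Θ`: series whose coefficients vanish in degrees not divisible by `N`. -/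
def InTheta (N : ℕ) (f : MvPowerSeries σ ℚ) : Prop :=
  ∀ d : σ →₀ ℕ, ¬ (N ∣ monDeg d) → MvPowerSeries.coeff d f = 0

/-- `f^(k)`: homogeneous component of total degree `N * k`. -/
noncomputable def homComp (N : ℕ) (f : MvPowerSeries σ ℚ) (k : ℕ) : MvPowerSeries σ ℚ :=
  fun d => if monDeg d = N * k then MvPowerSeries.coeff d f else 0

/-- The operation `⊙`: `f ⊙ g = Σ_{k,ℓ} C(k+ℓ,k) f^(k) g^(ℓ)`, defined coefficientwise
(at a monomial of total degree `m`, only indices `k, ℓ ≤ m` can contribute, for `N ≥ 1`). -/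
noncomputable def odot (N : ℕ) (f g : MvPowerSeries σ ℚ) : MvPowerSeries σ ℚ :=
  fun d => ∑ k ∈ Finset.range (monDeg d + 1), ∑ l ∈ Finset.range (monDeg d + 1),
    ((k + l).choose k : ℚ) * MvPowerSeries.coeff d (homComp N f k * homComp N g l)

/-- The `E`-transform: `E f = Σ_k (q^k / k!) f^(k)`. -/
noncomputable def Etrans (N : ℕ) (f : MvPowerSeries σ ℚ) :
    PowerSeries (MvPowerSeries σ ℚ) :=
  PowerSeries.mk fun k => (k.factorial : ℚ)⁻¹ • homComp N f k

/-- `exp(q·u) = Σ_k (q^k / k!) u^k`. -/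
noncomputable def expQ (u : MvPowerSeries σ ℚ) : PowerSeries (MvPowerSeries σ ℚ) :=
  PowerSeries.mk fun k => (k.factorial : ℚ)⁻¹ • u ^ k

/-- A homogeneous polynomial of degree `N`: finitely many nonzero coefficients,
all in total degree exactly `N`. -/
def IsHomogDeg (N : ℕ) (a : MvPowerSeries σ ℚ) : Prop :=
  {d : σ →₀ ℕ | MvPowerSeries.coeff d a ≠ 0}.Finite ∧
    ∀ d : σ →₀ ℕ, MvPowerSeries.coeff d a ≠ 0 → monDeg d = N

/-- Iterated `⊙`-product of a nonempty list. -/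
noncomputable def odotList (N : ℕ) : List (MvPowerSeries σ ℚ) → MvPowerSeries σ ℚ
  | [] => 1
  | [f] => f
  | f :: g :: rest => odot N f (odotList N (g :: rest))

namespace OdotAux

open Finset MvPowerSeries

lemma monDeg_add (a b : σ →₀ ℕ) : monDeg (a + b) = monDeg a + monDeg b :=
  Finsupp.sum_add_index' (fun _ => rfl) (fun _ _ _ => rfl)

lemma monDeg_zero : monDeg (0 : σ →₀ ℕ) = 0 := Finsupp.sum_zero_index

lemma eq_zero_of_monDeg {d : σ →₀ ℕ} (h : monDeg d = 0) : d = 0 := by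
  classical
  unfold monDeg Finsupp.sum at h
  ext a
  by_cases ha : a ∈ d.support
  · exact (Finset.sum_eq_zero_iff.mp h a ha)
  · simpa using Finsupp.notMem_support_iff.mp ha

/-- Supported in total degree `N * k`. -/
def HomOf (N k : ℕ) (a : MvPowerSeries σ ℚ) : Prop :=
  ∀ d : σ →₀ ℕ, monDeg d ≠ N * k → MvPowerSeries.coeff d a = 0

lemma homOf_zero {N k : ℕ} : HomOf N k (0 : MvPowerSeries σ ℚ) := fun _ _ => map_zero _

lemma homOf_one {N : ℕ} : HomOf N 0 (1 : MvPowerSeries σ ℚ) := by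
  classical
  intro d hd
  rw [MvPowerSeries.coeff_one, if_neg]
  rintro rfl
  exact hd (by simp [monDeg_zero])

lemma homOf_mul {N k l : ℕ} {a b : MvPowerSeries σ ℚ} (ha : HomOf N k a) (hb : HomOf N l b) :
    HomOf N (k + l) (a * b) := by
  classical
  intro d hd
  rw [MvPowerSeries.coeff_mul]
  refine Finset.sum_eq_zero fun p hp => ?_
  rw [Finset.HasAntidiagonal.mem_antidiagonal] at hp
  by_cases h1 : monDeg p.1 = N * k
  · have h2 : monDeg p.2 ≠ N * l := by
      intro h2
      exact hd (by rw [← hp, monDeg_add, h1, h2, Nat.mul_add])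
    rw [hb _ h2, mul_zero]
  · rw [ha _ h1, zero_mul]

lemma homOf_pow {N : ℕ} {a : MvPowerSeries σ ℚ} (ha : HomOf N 1 a) (n : ℕ) :
    HomOf N n (a ^ n) := by
  induction n with
  | zero => simpa using (homOf_one : HomOf N 0 (1 : MvPowerSeries σ ℚ))
  | succ n ih => rw [pow_succ]; exact homOf_mul ih ha

lemma homOf_smul {N k : ℕ} {a : MvPowerSeries σ ℚ} (q : ℚ) (ha : HomOf N k a) :
    HomOf N k (q • a) := by
  intro d hd
  rw [map_smul, ha _ hd, smul_zero]

lemma homOf_sum {N k : ℕ} {ι : Type*} {s : Finset ι} {F : ι → MvPowerSeries σ ℚ}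
    (h : ∀ i ∈ s, HomOf N k (F i)) : HomOf N k (∑ i ∈ s, F i) := by
  intro d hd
  rw [map_sum]
  exact Finset.sum_eq_zero fun i hi => h i hi d hd

/-- `f` is represented by the sequence `c` of homogeneous pieces. -/
def Rep (N : ℕ) (f : MvPowerSeries σ ℚ) (c : ℕ → MvPowerSeries σ ℚ) : Prop :=
  (∀ n, HomOf N n (c n)) ∧
    ∀ d : σ →₀ ℕ, MvPowerSeries.coeff d f =
      ∑ n ∈ Finset.range (monDeg d + 1), MvPowerSeries.coeff d (c n)

lemma sum_pick {N : ℕ} (hN : 1 ≤ N) {c : ℕ → MvPowerSeries σ ℚ}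
    (hc : ∀ n, HomOf N n (c n)) {d : σ →₀ ℕ} {q : ℕ} (hq : monDeg d = N * q) :
    ∑ n ∈ Finset.range (monDeg d + 1), MvPowerSeries.coeff d (c n)
      = MvPowerSeries.coeff d (c q) := by
  refine Finset.sum_eq_single q (fun n _ hn => hc n d ?_) (fun hq' => ?_)
  · rw [hq]
    exact fun h => hn (Nat.eq_of_mul_eq_mul_left hN h).symm
  · exfalso
    apply hq'
    rw [Finset.mem_range, hq]
    have : q ≤ N * q := Nat.le_mul_of_pos_left q hN
    omega

lemma sum_nopick {N : ℕ} {c : ℕ → MvPowerSeries σ ℚ}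
    (hc : ∀ n, HomOf N n (c n)) {d : σ →₀ ℕ} (hd : ¬ N ∣ monDeg d) :
    ∑ n ∈ Finset.range (monDeg d + 1), MvPowerSeries.coeff d (c n) = 0 :=
  Finset.sum_eq_zero fun n _ => hc n d (fun h => hd ⟨n, h⟩)

lemma Rep.coeff_pick {N : ℕ} (hN : 1 ≤ N) {f : MvPowerSeries σ ℚ} {c : ℕ → MvPowerSeries σ ℚ}
    (h : Rep N f c) {d : σ →₀ ℕ} {q : ℕ} (hq : monDeg d = N * q) :
    MvPowerSeries.coeff d f = MvPowerSeries.coeff d (c q) := by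
  rw [h.2 d, sum_pick hN h.1 hq]

lemma Rep.coeff_nopick {N : ℕ} {f : MvPowerSeries σ ℚ} {c : ℕ → MvPowerSeries σ ℚ}
    (h : Rep N f c) {d : σ →₀ ℕ} (hd : ¬ N ∣ monDeg d) :
    MvPowerSeries.coeff d f = 0 := by
  rw [h.2 d, sum_nopick h.1 hd]

lemma rep_ext {N : ℕ} {f g : MvPowerSeries σ ℚ} {c : ℕ → MvPowerSeries σ ℚ}
    (hf : Rep N f c) (hg : Rep N g c) : f = g := by
  ext d
  rw [hf.2 d, hg.2 d]

lemma rep_mul_coeff {N : ℕ} (hN : 1 ≤ N) {f : MvPowerSeries σ ℚ} {c : ℕ → MvPowerSeries σ ℚ}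
    (hf : Rep N f c) (a : MvPowerSeries σ ℚ) (d : σ →₀ ℕ) :
    MvPowerSeries.coeff d (a * f)
      = ∑ n ∈ Finset.range (monDeg d + 1), MvPowerSeries.coeff d (a * c n) := by
  classical
  rw [MvPowerSeries.coeff_mul]
  have step : ∀ p ∈ Finset.HasAntidiagonal.antidiagonal d,
      MvPowerSeries.coeff p.1 a * MvPowerSeries.coeff p.2 f
        = ∑ n ∈ Finset.range (monDeg d + 1),
            MvPowerSeries.coeff p.1 a * MvPowerSeries.coeff p.2 (c n) := by
    intro p hp
    rw [Finset.HasAntidiagonal.mem_antidiagonal] at hp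
    have hle : monDeg p.2 ≤ monDeg d := by
      rw [← hp, monDeg_add]; omega
    rw [hf.2 p.2, Finset.mul_sum]
    apply Finset.sum_subset (Finset.range_subset_range.mpr (by omega))
    intro n _ hn
    rw [Finset.mem_range, not_lt] at hn
    have hnn : n ≤ N * n := Nat.le_mul_of_pos_left n hN
    rw [hf.1 n p.2 (by omega), mul_zero]
  rw [Finset.sum_congr rfl step, Finset.sum_comm]
  refine Finset.sum_congr rfl fun n _ => ?_
  rw [MvPowerSeries.coeff_mul]

lemma sq_to_antidiag {M : Type*} [AddCommMonoid M] (m : ℕ) (G : ℕ → ℕ → M)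
    (hG : ∀ k l, m < k + l → G k l = 0) :
    ∑ k ∈ Finset.range (m + 1), ∑ l ∈ Finset.range (m + 1), G k l
      = ∑ n ∈ Finset.range (m + 1), ∑ p ∈ Finset.HasAntidiagonal.antidiagonal n, G p.1 p.2 := by
  have h1 : ∀ k ∈ Finset.range (m + 1),
      (∑ l ∈ Finset.range (m + 1), G k l) = ∑ l ∈ Finset.range (m + 1 - k), G k l := by
    intro k hk
    rw [Finset.mem_range] at hk
    refine (Finset.sum_subset (Finset.range_subset_range.mpr (by omega)) fun l hl hl' => ?_).symm
    rw [Finset.mem_range] at hl hl'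
    exact hG k l (by omega)
  have h2 : ∀ n ∈ Finset.range (m + 1),
      (∑ p ∈ Finset.HasAntidiagonal.antidiagonal n, G p.1 p.2) = ∑ k ∈ Finset.range (n + 1), G k (n - k) :=
    fun n _ => Finset.Nat.sum_antidiagonal_eq_sum_range_succ_mk _ n
  rw [Finset.sum_congr rfl h1, Finset.sum_congr rfl h2, Finset.sum_sigma', Finset.sum_sigma']
  refine Finset.sum_nbij' (fun p => ⟨p.1 + p.2, p.1⟩) (fun p => ⟨p.2, p.1 - p.2⟩) ?_ ?_ ?_ ?_ ?_
  · rintro ⟨k, l⟩ h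
    simp only [Finset.mem_sigma, Finset.mem_range] at h
    dsimp only
    simp only [Finset.mem_sigma, Finset.mem_range]
    omega
  · rintro ⟨n, k⟩ h
    simp only [Finset.mem_sigma, Finset.mem_range] at h
    dsimp only
    simp only [Finset.mem_sigma, Finset.mem_range]
    omega
  · rintro ⟨k, l⟩ h
    dsimp only
    rw [Nat.add_sub_cancel_left]
  · rintro ⟨n, k⟩ h
    simp only [Finset.mem_sigma, Finset.mem_range] at h
    dsimp only
    have hkn : k + (n - k) = n := by omega
    rw [hkn]
  · rintro ⟨k, l⟩ h
    simp only [Finset.mem_sigma, Finset.mem_range] at h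
    dsimp only
    congr 1
    omega

lemma rep_mul {N : ℕ} (hN : 1 ≤ N) {f g : MvPowerSeries σ ℚ}
    {c c' : ℕ → MvPowerSeries σ ℚ} (hf : Rep N f c) (hg : Rep N g c') :
    Rep N (f * g) (fun n => ∑ p ∈ Finset.HasAntidiagonal.antidiagonal n, c p.1 * c' p.2) := by
  constructor
  · intro n
    refine homOf_sum fun p hp => ?_
    rw [Finset.HasAntidiagonal.mem_antidiagonal] at hp
    exact hp ▸ homOf_mul (hf.1 p.1) (hg.1 p.2)
  · intro d
    have e1 : MvPowerSeries.coeff d (f * g)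
        = ∑ l ∈ Finset.range (monDeg d + 1), MvPowerSeries.coeff d (f * c' l) :=
      rep_mul_coeff hN hg f d
    have e2 : ∀ l, MvPowerSeries.coeff d (f * c' l)
        = ∑ k ∈ Finset.range (monDeg d + 1), MvPowerSeries.coeff d (c k * c' l) := by
      intro l
      rw [mul_comm f (c' l), rep_mul_coeff hN hf (c' l) d]
      exact Finset.sum_congr rfl fun k _ => by rw [mul_comm]
    rw [e1]
    simp_rw [e2]
    rw [Finset.sum_comm]
    have := sq_to_antidiag (monDeg d)
      (fun k l => MvPowerSeries.coeff d (c k * c' l)) (fun k l hkl => by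
        refine homOf_mul (hf.1 k) (hg.1 l) d ?_
        have : k + l ≤ N * (k + l) := Nat.le_mul_of_pos_left _ hN
        omega)
    rw [this]
    exact Finset.sum_congr rfl fun n _ => (map_sum _ _ _).symm

lemma rep_mul_hom {N j : ℕ} (hN : 1 ≤ N) {a f : MvPowerSeries σ ℚ}
    {c : ℕ → MvPowerSeries σ ℚ} (ha : HomOf N j a) (hf : Rep N f c) :
    Rep N (a * f) (fun n => if j ≤ n then a * c (n - j) else 0) := by
  constructor
  · intro n
    by_cases h : j ≤ n
    · simpa [h, Nat.add_sub_cancel' h] using homOf_mul ha (hf.1 (n - j))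
    · simpa [h] using (homOf_zero : HomOf N n (0 : MvPowerSeries σ ℚ))
  · intro d
    rw [rep_mul_coeff hN hf a d]
    have hvanish : ∀ k, monDeg d < j + k → MvPowerSeries.coeff d (a * c k) = 0 := by
      intro k hk
      refine homOf_mul ha (hf.1 k) d ?_
      have : j + k ≤ N * (j + k) := Nat.le_mul_of_pos_left _ hN
      omega
    rw [show (∑ n ∈ Finset.range (monDeg d + 1),
        MvPowerSeries.coeff d (if j ≤ n then a * c (n - j) else 0))
      = ∑ n ∈ (Finset.range (monDeg d + 1)).filter (j ≤ ·),
          MvPowerSeries.coeff d (a * c (n - j)) from by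
        rw [Finset.sum_filter]
        exact Finset.sum_congr rfl fun n _ => by split <;> simp_all]
    rw [show (∑ n ∈ Finset.range (monDeg d + 1), MvPowerSeries.coeff d (a * c n))
      = ∑ n ∈ Finset.range (monDeg d + 1 - j), MvPowerSeries.coeff d (a * c n) from
        (Finset.sum_subset (Finset.range_subset_range.mpr (by omega)) fun k hk hk' => by
          rw [Finset.mem_range] at hk hk'
          exact hvanish k (by omega)).symm]
    refine Finset.sum_nbij' (fun k => k + j) (fun n => n - j) ?_ ?_ ?_ ?_ ?_
    · intro k hk
      simp only [Finset.mem_filter, Finset.mem_range] at hk ⊢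
      omega
    · intro n hn
      simp only [Finset.mem_filter, Finset.mem_range] at hn ⊢
      omega
    · intro k _; omega
    · intro n hn
      simp only [Finset.mem_filter, Finset.mem_range] at hn
      omega
    · intro k _
      rw [Nat.add_sub_cancel]
lemma coeff_homComp {N : ℕ} (f : MvPowerSeries σ ℚ) (k : ℕ) (d : σ →₀ ℕ) :
    MvPowerSeries.coeff d (homComp N f k)
      = if monDeg d = N * k then MvPowerSeries.coeff d f else 0 := rfl

lemma homComp_eq {N : ℕ} (hN : 1 ≤ N) {f : MvPowerSeries σ ℚ} {c : ℕ → MvPowerSeries σ ℚ}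
    (hf : Rep N f c) (k : ℕ) : homComp N f k = c k := by
  ext d
  rw [coeff_homComp]
  split_ifs with h
  · exact hf.coeff_pick hN h
  · exact (hf.1 k d h).symm

lemma rep_odot {N : ℕ} (hN : 1 ≤ N) {f g : MvPowerSeries σ ℚ}
    {c c' : ℕ → MvPowerSeries σ ℚ} (hf : Rep N f c) (hg : Rep N g c') :
    Rep N (odot N f g)
      (fun n => ∑ p ∈ Finset.HasAntidiagonal.antidiagonal n, (n.choose p.1 : ℚ) • (c p.1 * c' p.2)) := by
  constructor
  · intro n
    refine homOf_sum fun p hp => ?_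
    rw [Finset.HasAntidiagonal.mem_antidiagonal] at hp
    exact homOf_smul _ (hp ▸ homOf_mul (hf.1 p.1) (hg.1 p.2))
  · intro d
    have hod : MvPowerSeries.coeff d (odot N f g)
        = ∑ k ∈ Finset.range (monDeg d + 1), ∑ l ∈ Finset.range (monDeg d + 1),
            ((k + l).choose k : ℚ) * MvPowerSeries.coeff d (homComp N f k * homComp N g l) :=
      rfl
    rw [hod]
    simp_rw [homComp_eq hN hf, homComp_eq hN hg]
    rw [sq_to_antidiag (monDeg d)
      (fun k l => ((k + l).choose k : ℚ) * MvPowerSeries.coeff d (c k * c' l))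
      (fun k l hkl => by
        rw [homOf_mul (hf.1 k) (hg.1 l) d (by
          have : k + l ≤ N * (k + l) := Nat.le_mul_of_pos_left _ hN
          omega), mul_zero])]
    refine Finset.sum_congr rfl fun n _ => ?_
    rw [map_sum]
    refine Finset.sum_congr rfl fun p hp => ?_
    rw [Finset.HasAntidiagonal.mem_antidiagonal] at hp
    rw [map_smul, smul_eq_mul, hp]

lemma rep_geom {N : ℕ} (hN : 1 ≤ N) {u : MvPowerSeries σ ℚ} (hu : HomOf N 1 u) :
    Rep N (1 - u)⁻¹ (fun n => u ^ n) := by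
  classical
  have hcc : MvPowerSeries.constantCoeff (1 - u) ≠ 0 := by
    rw [map_sub, map_one, ← MvPowerSeries.coeff_zero_eq_constantCoeff_apply,
      hu 0 (by rw [monDeg_zero]; omega), sub_zero]
    exact one_ne_zero
  set S : MvPowerSeries σ ℚ :=
    fun d => ∑ n ∈ Finset.range (monDeg d + 1), MvPowerSeries.coeff d (u ^ n) with hSdef
  have hS : Rep N S (fun n => u ^ n) := ⟨homOf_pow hu, fun d => rfl⟩
  have hmul : S * (1 - u) = 1 := by
    ext d
    rw [mul_sub, mul_one, map_sub, hS.2 d, mul_comm S u, rep_mul_coeff hN hS u d]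
    have hstep : ∀ n, u * u ^ n = u ^ (n + 1) := fun n => (pow_succ' u n).symm
    simp_rw [hstep]
    by_cases hdvd : N ∣ monDeg d
    · obtain ⟨q, hq⟩ := hdvd
      rw [sum_pick hN (homOf_pow hu) hq]
      match q with
      | 0 =>
        have hz : ∑ n ∈ Finset.range (monDeg d + 1), MvPowerSeries.coeff d (u ^ (n + 1))
            = 0 := Finset.sum_eq_zero fun n _ => homOf_pow hu (n + 1) d (by
              have : n + 1 ≤ N * (n + 1) := Nat.le_mul_of_pos_left _ hN
              omega)
        rw [hz, sub_zero, pow_zero]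
      | q' + 1 =>
        have hz : ∑ n ∈ Finset.range (monDeg d + 1), MvPowerSeries.coeff d (u ^ (n + 1))
            = MvPowerSeries.coeff d (u ^ (q' + 1)) := by
          refine Finset.sum_eq_single q' (fun n _ hn => homOf_pow hu (n + 1) d (by
            rw [hq]
            intro hcon
            have := Nat.eq_of_mul_eq_mul_left hN hcon
            omega)) (fun hq' => ?_)
          · exfalso
            apply hq'
            rw [Finset.mem_range, hq]
            have : q' + 1 ≤ N * (q' + 1) := Nat.le_mul_of_pos_left _ hN
            omega
        rw [hz, sub_self]
        have hd0 : d ≠ 0 := by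
          intro h
          rw [h, monDeg_zero] at hq
          have : q' + 1 ≤ N * (q' + 1) := Nat.le_mul_of_pos_left _ hN
          omega
        rw [MvPowerSeries.coeff_one, if_neg hd0]
    · rw [sum_nopick (homOf_pow hu) hdvd,
        Finset.sum_eq_zero (fun n _ => homOf_pow hu (n + 1) d
          (fun h => hdvd ⟨n + 1, h⟩)), sub_zero]
      have hd0 : d ≠ 0 := by
        intro h
        rw [h, monDeg_zero] at hdvd
        exact hdvd ⟨0, by omega⟩
      rw [MvPowerSeries.coeff_one, if_neg hd0]
  have heq : S = (1 - u)⁻¹ := (MvPowerSeries.eq_inv_iff_mul_eq_one hcc).mpr hmul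
  rwa [heq] at hS
/-- Complete homogeneous-type sum `h_k(A,B) = Σ_{i+j=k} A^i B^j`. -/
noncomputable def hh (A B : MvPowerSeries σ ℚ) (k : ℕ) : MvPowerSeries σ ℚ :=
  ∑ p ∈ Finset.HasAntidiagonal.antidiagonal k, A ^ p.1 * B ^ p.2

lemma hh_geom (A B : MvPowerSeries σ ℚ) (k : ℕ) :
    (A - B) * hh A B k = A ^ (k + 1) - B ^ (k + 1) := by
  rw [hh, Finset.Nat.sum_antidiagonal_eq_sum_range_succ_mk]
  have h := geom_sum₂_mul A B (k + 1)
  simp only [Nat.add_sub_cancel] at h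
  rw [mul_comm]
  exact h

lemma core (A B C D : MvPowerSeries σ ℚ) (m : ℕ) :
    (A - B) * (C - D) *
      ∑ p ∈ Finset.HasAntidiagonal.antidiagonal m, (((m + 1).choose p.1 : ℚ)) • (hh A B p.1 * hh C D p.2)
    = A * (A + C) ^ (m + 1) - B * (B + C) ^ (m + 1)
        - A * (A + D) ^ (m + 1) + B * (B + D) ^ (m + 1) := by
  have expand : ∀ X Y : MvPowerSeries σ ℚ, X * (X + Y) ^ (m + 1)
      = ∑ i ∈ Finset.range (m + 2), ((m + 1).choose i : ℚ) • (X ^ (i + 1) * Y ^ (m + 1 - i)) := by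
    intro X Y
    rw [add_pow, Finset.mul_sum]
    refine Finset.sum_congr rfl fun i _ => ?_
    rw [Nat.cast_smul_eq_nsmul, nsmul_eq_mul]

    ring
  have inner : ∀ (i k : ℕ), (A ^ i - B ^ i) * (C ^ k - D ^ k)
      = A ^ i * C ^ k - B ^ i * C ^ k - A ^ i * D ^ k + B ^ i * D ^ k := fun i k => by ring
  have hL : (A - B) * (C - D) *
      ∑ p ∈ Finset.HasAntidiagonal.antidiagonal m, (((m + 1).choose p.1 : ℚ)) • (hh A B p.1 * hh C D p.2)
      = ∑ i ∈ Finset.range (m + 1), ((m + 1).choose i : ℚ) •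
          ((A ^ (i + 1) - B ^ (i + 1)) * (C ^ (m + 1 - i) - D ^ (m + 1 - i))) := by
    rw [Finset.Nat.sum_antidiagonal_eq_sum_range_succ_mk, Finset.mul_sum]
    refine Finset.sum_congr rfl fun i hi => ?_
    rw [Finset.mem_range] at hi
    have he : m + 1 - i = (m - i) + 1 := by omega
    rw [he, mul_smul_comm]
    congr 1
    calc (A - B) * (C - D) * (hh A B i * hh C D (m - i))
        = ((A - B) * hh A B i) * ((C - D) * hh C D (m - i)) := by ring
      _ = _ := by rw [hh_geom, hh_geom]
  have htop : ((m + 1).choose (m + 1) : ℚ) • (A ^ (m + 1 + 1) * C ^ (m + 1 - (m + 1)))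
      - ((m + 1).choose (m + 1) : ℚ) • (B ^ (m + 1 + 1) * C ^ (m + 1 - (m + 1)))
      - ((m + 1).choose (m + 1) : ℚ) • (A ^ (m + 1 + 1) * D ^ (m + 1 - (m + 1)))
      + ((m + 1).choose (m + 1) : ℚ) • (B ^ (m + 1 + 1) * D ^ (m + 1 - (m + 1))) = 0 := by
    simp only [Nat.sub_self, pow_zero, mul_one]
    abel
  have hR : A * (A + C) ^ (m + 1) - B * (B + C) ^ (m + 1)
        - A * (A + D) ^ (m + 1) + B * (B + D) ^ (m + 1)
      = ∑ i ∈ Finset.range (m + 1), ((m + 1).choose i : ℚ) •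
          ((A ^ (i + 1) - B ^ (i + 1)) * (C ^ (m + 1 - i) - D ^ (m + 1 - i))) := by
    conv_lhs => rw [expand A C, expand B C, expand A D, expand B D,
      ← Finset.sum_sub_distrib, ← Finset.sum_sub_distrib, ← Finset.sum_add_distrib,
      Finset.sum_range_succ, htop, add_zero]
    exact Finset.sum_congr rfl fun i _ => by rw [inner, smul_add, smul_sub, smul_sub]
  rw [hL, hR]
lemma homOf_add {N k : ℕ} {a b : MvPowerSeries σ ℚ} (ha : HomOf N k a) (hb : HomOf N k b) :
    HomOf N k (a + b) := by
  intro d hd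
  rw [map_add, ha d hd, hb d hd, add_zero]

lemma homOf_of_isHomog {N : ℕ} {a : MvPowerSeries σ ℚ} (h : IsHomogDeg N a) : HomOf N 1 a := by
  intro d hd
  by_contra hc
  exact hd (by rw [h.2 d hc, mul_one])

lemma key_n (u₁ u₂ v₁ v₂ b : MvPowerSeries σ ℚ) (n : ℕ) :
    ((u₁ - u₂) * (v₁ - v₂)) *
      (∑ p ∈ Finset.HasAntidiagonal.antidiagonal n, (n.choose p.1 : ℚ) •
        (hh u₁ u₂ p.1 * (if 1 ≤ p.2 then b * hh v₁ v₂ (p.2 - 1) else 0)))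
    = b * u₁ * (u₁ + v₁) ^ n - b * u₂ * (u₂ + v₁) ^ n
        - b * u₁ * (u₁ + v₂) ^ n + b * u₂ * (u₂ + v₂) ^ n := by
  match n with
  | 0 =>
    rw [Finset.Nat.antidiagonal_zero]
    simp only [Finset.sum_singleton]
    norm_num
  | m + 1 =>
    rw [Finset.Nat.antidiagonal_succ', Finset.sum_cons]
    have h0 : (((m + 1).choose (m + 1) : ℚ)) •
        (hh u₁ u₂ (m + 1) * (if (1 : ℕ) ≤ 0 then b * hh v₁ v₂ (0 - 1) else 0)) = 0 := by
      norm_num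
    rw [h0, zero_add, Finset.sum_map]
    have hsum : ∑ p ∈ Finset.HasAntidiagonal.antidiagonal m,
        ((m + 1).choose ((Function.Embedding.prodMap (Function.Embedding.refl ℕ)
            ⟨Nat.succ, Nat.succ_injective⟩) p).1 : ℚ) •
          (hh u₁ u₂ ((Function.Embedding.prodMap (Function.Embedding.refl ℕ)
            ⟨Nat.succ, Nat.succ_injective⟩) p).1 *
            (if 1 ≤ ((Function.Embedding.prodMap (Function.Embedding.refl ℕ)
              ⟨Nat.succ, Nat.succ_injective⟩) p).2 then
                b * hh v₁ v₂ (((Function.Embedding.prodMap (Function.Embedding.refl ℕ)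
                  ⟨Nat.succ, Nat.succ_injective⟩) p).2 - 1) else 0))
        = b * ∑ p ∈ Finset.HasAntidiagonal.antidiagonal m,
            ((m + 1).choose p.1 : ℚ) • (hh u₁ u₂ p.1 * hh v₁ v₂ p.2) := by
      rw [Finset.mul_sum]
      refine Finset.sum_congr rfl fun p _ => ?_
      simp only [Function.Embedding.coe_prodMap, Function.Embedding.coeFn_mk,
        Function.Embedding.refl_apply, Prod.map_fst, Prod.map_snd, Nat.succ_eq_add_one]
      simp only [show 1 ≤ p.2 + 1 from Nat.le_add_left 1 p.2, ↓reduceIte]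
      rw [Nat.add_sub_cancel, mul_smul_comm]
      congr 1
      ring
    rw [hsum, show ((u₁ - u₂) * (v₁ - v₂)) * (b * ∑ p ∈ Finset.HasAntidiagonal.antidiagonal m,
        ((m + 1).choose p.1 : ℚ) • (hh u₁ u₂ p.1 * hh v₁ v₂ p.2))
      = b * ((u₁ - u₂) * (v₁ - v₂) * ∑ p ∈ Finset.HasAntidiagonal.antidiagonal m,
        ((m + 1).choose p.1 : ℚ) • (hh u₁ u₂ p.1 * hh v₁ v₂ p.2)) from by ring,
      core u₁ u₂ v₁ v₂ m]
    ring

end OdotAux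

set_option maxHeartbeats 2000000 in
open OdotAux in
/-- example `P^{0,1}_{2,2}`:
`((1-u₁)⁻¹(1-u₂)⁻¹) ⊙ (b (1-v₁)⁻¹(1-v₂)⁻¹)
  = b (1 - u₁u₂ - v₁ - v₂ + v₁v₂) ∏_{i,j} (1-u_i-v_j)⁻¹`. -/
theorem odot_example_P01_22 {σ : Type*} (N : ℕ) (hN : 1 ≤ N)
    (u₁ u₂ v₁ v₂ b : MvPowerSeries σ ℚ)
    (hu₁ : IsHomogDeg N u₁) (hu₂ : IsHomogDeg N u₂)
    (hv₁ : IsHomogDeg N v₁) (hv₂ : IsHomogDeg N v₂) (hb : IsHomogDeg N b)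
    (hdist : [u₁ + v₁, u₁ + v₂, u₂ + v₁, u₂ + v₂].Pairwise (· ≠ ·)) :
    odot N ((1 - u₁)⁻¹ * (1 - u₂)⁻¹) (b * ((1 - v₁)⁻¹ * (1 - v₂)⁻¹)) =
      b * (1 - u₁ * u₂ - v₁ - v₂ + v₁ * v₂) *
        ((1 - u₁ - v₁)⁻¹ * (1 - u₁ - v₂)⁻¹ * (1 - u₂ - v₁)⁻¹ * (1 - u₂ - v₂)⁻¹) := by
  classical
  have hU1 := homOf_of_isHomog hu₁
  have hU2 := homOf_of_isHomog hu₂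
  have hV1 := homOf_of_isHomog hv₁
  have hV2 := homOf_of_isHomog hv₂
  have hB := homOf_of_isHomog hb
  have hcc0 : ∀ {a : MvPowerSeries σ ℚ}, HomOf N 1 a →
      MvPowerSeries.constantCoeff a = 0 := by
    intro a ha
    rw [← MvPowerSeries.coeff_zero_eq_constantCoeff_apply]
    exact ha 0 (by rw [monDeg_zero]; omega)
  have hq : ∀ {x y : MvPowerSeries σ ℚ}, HomOf N 1 x → HomOf N 1 y →
      (1 - x - y) * (1 - x - y)⁻¹ = 1 := by
    intro x y hx hy
    apply MvPowerSeries.mul_inv_cancel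
    rw [map_sub, map_sub, map_one, hcc0 hx, hcc0 hy]
    norm_num
  have h11 := hq hU1 hV1
  have h12 := hq hU1 hV2
  have h21 := hq hU2 hV1
  have h22 := hq hU2 hV2
  have repI : ∀ {x y : MvPowerSeries σ ℚ}, HomOf N 1 x → HomOf N 1 y →
      Rep N (1 - x - y)⁻¹ (fun n => (x + y) ^ n) := by
    intro x y hx hy
    rw [sub_sub]
    exact rep_geom hN (homOf_add hx hy)
  have rep11 := repI hU1 hV1
  have rep12 := repI hU1 hV2
  have rep21 := repI hU2 hV1
  have rep22 := repI hU2 hV2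
  have repU : Rep N ((1 - u₁)⁻¹ * (1 - u₂)⁻¹) (hh u₁ u₂) :=
    rep_mul hN (rep_geom hN hU1) (rep_geom hN hU2)
  have repV : Rep N ((1 - v₁)⁻¹ * (1 - v₂)⁻¹) (hh v₁ v₂) :=
    rep_mul hN (rep_geom hN hV1) (rep_geom hN hV2)
  have repG : Rep N (b * ((1 - v₁)⁻¹ * (1 - v₂)⁻¹))
      (fun n => if 1 ≤ n then b * hh v₁ v₂ (n - 1) else 0) := rep_mul_hom hN hB repV
  have repL := rep_odot hN repU repG
  obtain ⟨hd1, -⟩ := List.pairwise_cons.mp hdist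
  have hvne : v₁ ≠ v₂ := fun h => (hd1 (u₁ + v₂) (by simp)) (by rw [h])
  have hune : u₁ ≠ u₂ := fun h => (hd1 (u₂ + v₁) (by simp)) (by rw [h])
  have hfrac : ((u₁ - u₂) * (v₁ - v₂)) * (b * (1 - u₁ * u₂ - v₁ - v₂ + v₁ * v₂) *
      ((1 - u₁ - v₁)⁻¹ * (1 - u₁ - v₂)⁻¹ * (1 - u₂ - v₁)⁻¹ * (1 - u₂ - v₂)⁻¹))
      = b * u₁ * (1 - u₁ - v₁)⁻¹ - b * u₂ * (1 - u₂ - v₁)⁻¹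
        - b * u₁ * (1 - u₁ - v₂)⁻¹ + b * u₂ * (1 - u₂ - v₂)⁻¹ := by
    have e11 : (1 - u₁ - v₂) * (1 - u₂ - v₁) * (1 - u₂ - v₂) *
        ((1 - u₁ - v₁)⁻¹ * (1 - u₁ - v₂)⁻¹ * (1 - u₂ - v₁)⁻¹ * (1 - u₂ - v₂)⁻¹)
        = (1 - u₁ - v₁)⁻¹ := by
      linear_combination ((1 - u₁ - v₁)⁻¹ * ((1 - u₂ - v₁) * (1 - u₂ - v₁)⁻¹ *
          ((1 - u₂ - v₂) * (1 - u₂ - v₂)⁻¹))) * h12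
        + ((1 - u₁ - v₁)⁻¹ * ((1 - u₂ - v₂) * (1 - u₂ - v₂)⁻¹)) * h21
        + (1 - u₁ - v₁)⁻¹ * h22
    have e21 : (1 - u₁ - v₁) * (1 - u₁ - v₂) * (1 - u₂ - v₂) *
        ((1 - u₁ - v₁)⁻¹ * (1 - u₁ - v₂)⁻¹ * (1 - u₂ - v₁)⁻¹ * (1 - u₂ - v₂)⁻¹)
        = (1 - u₂ - v₁)⁻¹ := by
      linear_combination ((1 - u₂ - v₁)⁻¹ * ((1 - u₁ - v₂) * (1 - u₁ - v₂)⁻¹ *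
          ((1 - u₂ - v₂) * (1 - u₂ - v₂)⁻¹))) * h11
        + ((1 - u₂ - v₁)⁻¹ * ((1 - u₂ - v₂) * (1 - u₂ - v₂)⁻¹)) * h12
        + (1 - u₂ - v₁)⁻¹ * h22
    have e12 : (1 - u₁ - v₁) * (1 - u₂ - v₁) * (1 - u₂ - v₂) *
        ((1 - u₁ - v₁)⁻¹ * (1 - u₁ - v₂)⁻¹ * (1 - u₂ - v₁)⁻¹ * (1 - u₂ - v₂)⁻¹)
        = (1 - u₁ - v₂)⁻¹ := by
      linear_combination ((1 - u₁ - v₂)⁻¹ * ((1 - u₂ - v₁) * (1 - u₂ - v₁)⁻¹ *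
          ((1 - u₂ - v₂) * (1 - u₂ - v₂)⁻¹))) * h11
        + ((1 - u₁ - v₂)⁻¹ * ((1 - u₂ - v₂) * (1 - u₂ - v₂)⁻¹)) * h21
        + (1 - u₁ - v₂)⁻¹ * h22
    have e22 : (1 - u₁ - v₁) * (1 - u₁ - v₂) * (1 - u₂ - v₁) *
        ((1 - u₁ - v₁)⁻¹ * (1 - u₁ - v₂)⁻¹ * (1 - u₂ - v₁)⁻¹ * (1 - u₂ - v₂)⁻¹)
        = (1 - u₂ - v₂)⁻¹ := by
      linear_combination ((1 - u₂ - v₂)⁻¹ * ((1 - u₁ - v₂) * (1 - u₁ - v₂)⁻¹ *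
          ((1 - u₂ - v₁) * (1 - u₂ - v₁)⁻¹))) * h11
        + ((1 - u₂ - v₂)⁻¹ * ((1 - u₂ - v₁) * (1 - u₂ - v₁)⁻¹)) * h12
        + (1 - u₂ - v₂)⁻¹ * h21
    calc ((u₁ - u₂) * (v₁ - v₂)) * (b * (1 - u₁ * u₂ - v₁ - v₂ + v₁ * v₂) *
        ((1 - u₁ - v₁)⁻¹ * (1 - u₁ - v₂)⁻¹ * (1 - u₂ - v₁)⁻¹ * (1 - u₂ - v₂)⁻¹))
        = b * u₁ * ((1 - u₁ - v₂) * (1 - u₂ - v₁) * (1 - u₂ - v₂) *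
            ((1 - u₁ - v₁)⁻¹ * (1 - u₁ - v₂)⁻¹ * (1 - u₂ - v₁)⁻¹ * (1 - u₂ - v₂)⁻¹))
          - b * u₂ * ((1 - u₁ - v₁) * (1 - u₁ - v₂) * (1 - u₂ - v₂) *
            ((1 - u₁ - v₁)⁻¹ * (1 - u₁ - v₂)⁻¹ * (1 - u₂ - v₁)⁻¹ * (1 - u₂ - v₂)⁻¹))
          - b * u₁ * ((1 - u₁ - v₁) * (1 - u₂ - v₁) * (1 - u₂ - v₂) *
            ((1 - u₁ - v₁)⁻¹ * (1 - u₁ - v₂)⁻¹ * (1 - u₂ - v₁)⁻¹ * (1 - u₂ - v₂)⁻¹))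
          + b * u₂ * ((1 - u₁ - v₁) * (1 - u₁ - v₂) * (1 - u₂ - v₁) *
            ((1 - u₁ - v₁)⁻¹ * (1 - u₁ - v₂)⁻¹ * (1 - u₂ - v₁)⁻¹ * (1 - u₂ - v₂)⁻¹)) := by
          ring
      _ = _ := by rw [e11, e21, e12, e22]
  have hMne : (u₁ - u₂) * (v₁ - v₂) ≠ 0 :=
    mul_ne_zero (sub_ne_zero.mpr hune) (sub_ne_zero.mpr hvne)
  apply mul_left_cancel₀ hMne
  ext d
  rw [rep_mul_coeff hN repL ((u₁ - u₂) * (v₁ - v₂)) d, hfrac,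
    map_add, map_sub, map_sub,
    rep_mul_coeff hN rep11 (b * u₁) d, rep_mul_coeff hN rep21 (b * u₂) d,
    rep_mul_coeff hN rep12 (b * u₁) d, rep_mul_coeff hN rep22 (b * u₂) d,
    ← Finset.sum_sub_distrib, ← Finset.sum_sub_distrib, ← Finset.sum_add_distrib]
  refine Finset.sum_congr rfl fun n _ => ?_
  rw [key_n u₁ u₂ v₁ v₂ b n, map_add, map_sub, map_sub]
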